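/- Let A be an n×n symmetric matrix of rank r, and S a subset of indices of size r such that the principal submatrix Ã = A[S,S] is nonsingular. Define H to be zero everywhere except that H[S,S] = Ã⁻¹. Then H is symmetric, AHA = A, and HAH = H. -/

import Mathlib

open Matrix

theorem symmetric_block_construction {n r : ℕ}
    (A : Matrix (Fin n) (Fin n) ℝ) (hA : Aᵀ = A) (hrank : A.rank = r)
    (f : Fin r → Fin n) (hf : Function.Injective f)
    (hdet : (A.submatrix f f).det ≠ 0)
    (H : Matrix (Fin n) (Fin n) ℝ)
    (hHblock : ∀ k l : Fin r, H (f k) (f l) = (A.submatrix f f)⁻¹ k l)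
    (hHzero : ∀ i j : Fin n, (i ∉ Set.range f ∨ j ∉ Set.range f) → H i j = 0) :
    Hᵀ = H ∧ A * H * A = A ∧ H * A * H = H := by
  classical
  set B := A.submatrix f f with hB
  have hBsymm : Bᵀ = B := by
    ext p q
    simp only [transpose_apply, hB, submatrix_apply]
    conv_rhs => rw [← hA]
    rfl
  have hBinv : (B⁻¹)ᵀ = B⁻¹ := by
    rw [Matrix.transpose_nonsing_inv, hBsymm]
  have hBunit : IsUnit B.det := isUnit_iff_ne_zero.mpr hdet
  have hBinvmul : B⁻¹ * B = 1 := Matrix.nonsing_inv_mul B hBunit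
  have hBmulinv : B * B⁻¹ = 1 := Matrix.mul_nonsing_inv B hBunit
  -- sum helper
  have hsum : ∀ g : Fin n → ℝ, (∀ k, k ∉ Set.range f → g k = 0) →
      ∑ k, g k = ∑ p, g (f p) := by
    intro g hg
    calc ∑ k, g k = ∑ k ∈ Finset.univ.image f, g k :=
          (Finset.sum_subset (Finset.subset_univ _)
            (fun k _ hk => hg k (by simpa [Set.mem_range] using hk))).symm
      _ = ∑ p, g (f p) := Finset.sum_image (fun x _ y _ h => hf h)
  -- symmetry of H
  have hHsymm : Hᵀ = H := by
    ext i j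
    simp only [transpose_apply]
    by_cases hi : i ∈ Set.range f
    · by_cases hj : j ∈ Set.range f
      · obtain ⟨a, rfl⟩ := hi; obtain ⟨b, rfl⟩ := hj
        rw [hHblock, hHblock]
        exact congrFun (congrFun hBinv a) b
      · rw [hHzero _ _ (Or.inl hj), hHzero _ _ (Or.inr hj)]
    · rw [hHzero _ _ (Or.inr hi), hHzero _ _ (Or.inl hi)]
  -- columns of A are in span of the selected columns
  have hli : LinearIndependent ℝ (fun p => Aᵀ (f p)) := by
    rw [Fintype.linearIndependent_iff]
    intro c hc
    have h1 : B.mulVec c = 0 := by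
      ext q
      have h2 := congrFun hc (f q)
      simp only [Finset.sum_apply, Pi.smul_apply, smul_eq_mul, Pi.zero_apply,
        transpose_apply] at h2
      simpa [Matrix.mulVec, dotProduct, hB, mul_comm] using h2
    have h3 := congrArg (B⁻¹.mulVec) h1
    rw [Matrix.mulVec_mulVec, hBinvmul, Matrix.one_mulVec, Matrix.mulVec_zero] at h3
    intro p; exact congrFun h3 p
  have hUW : Submodule.span ℝ (Set.range fun p => Aᵀ (f p)) =
      Submodule.span ℝ (Set.range Aᵀ) := by
    apply Submodule.eq_of_le_of_finrank_le
    · apply Submodule.span_mono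
      rintro _ ⟨p, rfl⟩; exact ⟨f p, rfl⟩
    · have h1 : Module.finrank ℝ (Submodule.span ℝ (Set.range Aᵀ)) = r := by
        rw [← hrank, Matrix.rank, Matrix.range_mulVecLin]; rfl
      have h2 : Module.finrank ℝ
          (Submodule.span ℝ (Set.range fun p => Aᵀ (f p))) = r := by
        rw [finrank_span_eq_card hli, Fintype.card_fin]
      rw [h1, h2]
  have hcols : ∀ j, ∃ c : Fin r → ℝ, ∀ i, A i j = ∑ p, c p * A i (f p) := by
    intro j
    have hmem : Aᵀ j ∈ Submodule.span ℝ (Set.range fun p => Aᵀ (f p)) := by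
      rw [hUW]; exact Submodule.subset_span ⟨j, rfl⟩
    rw [Submodule.mem_span_range_iff_exists_fun] at hmem
    obtain ⟨c, hc⟩ := hmem
    refine ⟨c, fun i => ?_⟩
    have h4 := congrFun hc i
    simp only [Finset.sum_apply, Pi.smul_apply, smul_eq_mul, transpose_apply] at h4
    exact h4.symm
  choose X hX using hcols
  set C : Matrix (Fin n) (Fin r) ℝ := A.submatrix id f with hC
  set Rm : Matrix (Fin r) (Fin n) ℝ := A.submatrix f id with hRm
  set Xm : Matrix (Fin r) (Fin n) ℝ := fun p j => X j p with hXm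
  have hCX : C * Xm = A := by
    ext i j
    rw [Matrix.mul_apply]
    rw [hX j i]
    exact Finset.sum_congr rfl fun p _ => by
      simp only [hC, hXm, submatrix_apply, id_eq]; ring
  have hRX : Rm = B * Xm := by
    ext p j
    rw [Matrix.mul_apply]
    have := hX j (f p)
    simp only [hRm, submatrix_apply, id_eq]
    rw [this]
    exact Finset.sum_congr rfl fun s _ => by
      simp only [hB, hXm, submatrix_apply]; ring
  have hkey : C * B⁻¹ * Rm = A := by
    rw [hRX, ← Matrix.mul_assoc, Matrix.mul_assoc C B⁻¹ B, hBinvmul,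
      Matrix.mul_one, hCX]
  -- AHA = A
  have hAHA : A * H * A = A := by
    have entry : ∀ i j, (A * H * A) i j = (C * B⁻¹ * Rm) i j := by
      intro i j
      rw [Matrix.mul_apply, Matrix.mul_apply (M := C * B⁻¹)]
      rw [hsum _ (fun l hl => by
        rw [Matrix.mul_apply]
        rw [Finset.sum_eq_zero fun k _ => by rw [hHzero k l (Or.inr hl), mul_zero]]
        rw [zero_mul])]
      refine Finset.sum_congr rfl fun q _ => ?_
      have h1 : (A * H) i (f q) = (C * B⁻¹) i q := by
        rw [Matrix.mul_apply, Matrix.mul_apply]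
        rw [hsum _ (fun k hk => by rw [hHzero k (f q) (Or.inl hk), mul_zero])]
        refine Finset.sum_congr rfl fun p _ => ?_
        rw [hHblock]
        simp [hC]
      have h2 : A (f q) j = Rm q j := by simp [hRm]
      rw [h1, h2]
    ext i j
    rw [entry, hkey]
  -- HAH = H
  have hHAH : H * A * H = H := by
    ext i j
    rw [Matrix.mul_apply]
    by_cases hj : j ∈ Set.range f
    · by_cases hi : i ∈ Set.range f
      · obtain ⟨a, rfl⟩ := hi; obtain ⟨b, rfl⟩ := hj
        rw [hsum _ (fun l hl => by rw [hHzero l (f b) (Or.inl hl), mul_zero])]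
        have key : ∀ q, (H * A) (f a) (f q) = (1 : Matrix (Fin r) (Fin r) ℝ) a q := by
          intro q
          rw [Matrix.mul_apply]
          rw [hsum _ (fun k hk => by rw [hHzero (f a) k (Or.inr hk), zero_mul])]
          calc ∑ p, H (f a) (f p) * A (f p) (f q)
              = ∑ p, B⁻¹ a p * B p q := by
                refine Finset.sum_congr rfl fun p _ => ?_
                rw [hHblock]; rfl
            _ = (B⁻¹ * B) a q := (Matrix.mul_apply).symm
            _ = _ := by rw [hBinvmul]
        calc ∑ q, (H * A) (f a) (f q) * H (f q) (f b)
            = ∑ q, (1 : Matrix (Fin r) (Fin r) ℝ) a q * B⁻¹ q b := by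
              refine Finset.sum_congr rfl fun q _ => ?_
              rw [key, hHblock]
          _ = ((1 : Matrix (Fin r) (Fin r) ℝ) * B⁻¹) a b := (Matrix.mul_apply).symm
          _ = H (f a) (f b) := by rw [Matrix.one_mul, hHblock]
      · rw [hHzero i j (Or.inl hi)]
        refine Finset.sum_eq_zero fun l _ => ?_
        rw [Matrix.mul_apply]
        rw [Finset.sum_eq_zero fun k _ => by rw [hHzero i k (Or.inl hi), zero_mul]]
        rw [zero_mul]
    · rw [hHzero i j (Or.inr hj)]
      refine Finset.sum_eq_zero fun l _ => ?_
      rw [hHzero l j (Or.inr hj), mul_zero]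
  exact ⟨hHsymm, hAHA, hHAH⟩
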